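/- Let (A,B) be a separation of a graph G with a node z of a tree-decomposition (T, (X_t)) of G satisfying X_z ⊆ B, and let P_1, …, P_m (m = |A∩B|) be vertex-disjoint paths from subsets of A to X_z, each meeting A ∩ B in exactly one vertex v_i. Let T′ be obtained from T by adding a new leaf c adjacent to z, set X′_c = B, and for t ∈ V(T) set X′_t = (X_t ∩ A) ∪ {v_i : X_t ∩ B ∩ V(P_i) ≠ ∅}. Then (T′, (X′_t)) is a tree-decomposition of G. -/

import Mathlib

open SimpleGraph

/-- A tree-decomposition of the graph `G` over the tree `τ` with bags `X`. -/
structure IsTreeDecomp {V : Type} {T : Type} (G : SimpleGraph V) (τ : SimpleGraph T)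
    (X : T → Set V) : Prop where
  isTree : τ.IsTree
  coverV : ∀ v : V, ∃ t, v ∈ X t
  coverE : ∀ ⦃u v : V⦄, G.Adj u v → ∃ t, u ∈ X t ∧ v ∈ X t
  subtreeConn : ∀ v : V, (τ.induce {t | v ∈ X t}).Connected

/-- The graph `G` has tree-width at most `w`. -/
def TreewidthAtMost {V : Type} (G : SimpleGraph V) (w : ℤ) : Prop :=
  ∃ (T : Type) (τ : SimpleGraph T) (X : T → Set V),
    IsTreeDecomp G τ X ∧ ∀ t, ((X t).ncard : ℤ) ≤ w + 1

/-- `H` is a minor of `G`: there is a family of nonempty, pairwise disjoint, connected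
branch sets in `G`, one for each vertex of `H`, with edges of `H` realized by edges of `G`. -/
def IsMinorOf {W V : Type} (H : SimpleGraph W) (G : SimpleGraph V) : Prop :=
  ∃ f : W → Set V, (∀ w, (f w).Nonempty) ∧ (∀ w, (G.induce (f w)).Connected) ∧
    (Pairwise fun w₁ w₂ => Disjoint (f w₁) (f w₂)) ∧
    ∀ ⦃w₁ w₂⦄, H.Adj w₁ w₂ → ∃ u ∈ f w₁, ∃ x ∈ f w₂, G.Adj u x

/-- `F⁺`: the graph obtained from `F` by adding a new apex vertex adjacent to all of `F`. -/
def addApex {α : Type} (F : SimpleGraph α) : SimpleGraph (Option α) :=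
  SimpleGraph.fromRel (fun a b => (a = none ∧ b ≠ none) ∨
    ∃ x y, a = some x ∧ b = some y ∧ F.Adj x y)

/-- The neighbourhood `N_G(X)` of a vertex set `X`. -/
def nbhd {V : Type} (G : SimpleGraph V) (X : Set V) : Set V :=
  {v | v ∉ X ∧ ∃ u ∈ X, G.Adj u v}


namespace Stmt8Aux

/-- Claim C: a path from a `B`-vertex whose only possible `A ∩ B` vertex is its endpoint
stays inside `B`. -/
lemma walk_subset_side {V : Type} {G : SimpleGraph V} {A B : Set V}
    (hsepU : A ∪ B = Set.univ)
    (hsepE : ∀ a ∈ A \ B, ∀ b ∈ B \ A, ¬ G.Adj a b)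
    {s e : V} (r : G.Walk s e) (hr : r.IsPath) (hs : s ∈ B)
    (hAB : ∀ x ∈ r.support, x ∈ A ∩ B → x = e) :
    ∀ x ∈ r.support, x ∈ B := by
  induction r with
  | nil =>
    intro x hx
    simp only [SimpleGraph.Walk.support_nil, List.mem_singleton] at hx
    subst hx; exact hs
  | @cons u u' w h q ih =>
    have hq : q.IsPath := hr.of_cons
    by_cases hu' : u' ∈ B
    · have hrec := ih hq hu' (fun x hx hxAB => hAB x (by simp [SimpleGraph.Walk.support_cons, hx]) hxAB)
      intro x hx
      rcases (by simpa [SimpleGraph.Walk.support_cons] using hx : x = u ∨ x ∈ q.support) with rfl | hx'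
      · exact hs
      · exact hrec x hx'
    · exfalso
      have hu'A : u' ∈ A := by
        have h2 : u' ∈ A ∪ B := hsepU ▸ Set.mem_univ u'
        exact h2.resolve_right hu'
      by_cases huA : u ∈ A
      · have : u = w := hAB u (by simp [SimpleGraph.Walk.support_cons]) ⟨huA, hs⟩
        subst this
        have hnd := hr.support_nodup
        rw [SimpleGraph.Walk.support_cons] at hnd
        exact (List.nodup_cons.mp hnd).1 q.end_mem_support
      · exact hsepE u' ⟨hu'A, hu'⟩ u ⟨hs, huA⟩ h.symm

/-- Lift a walk in `G` with support in `S` to reachability in `G.induce S`. -/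
lemma reachable_induce_of_walk {α : Type} {G : SimpleGraph α} {S : Set α} :
    ∀ {x y : α} (w : G.Walk x y) (hx : x ∈ S) (hy : y ∈ S),
      (∀ u ∈ w.support, u ∈ S) → (G.induce S).Reachable ⟨x, hx⟩ ⟨y, hy⟩ := by
  intro x y w
  induction w with
  | nil => intro hx hy _; rfl
  | @cons u u' w h q ih =>
    intro hx hy hsupp
    have hu' : u' ∈ S := hsupp u' (by simp [SimpleGraph.Walk.support_cons])
    have hadj : (G.induce S).Adj ⟨u, hx⟩ ⟨u', hu'⟩ := by
      simpa using h
    exact hadj.reachable.trans (ih hu' hy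
      (fun t ht => hsupp t (by simp [SimpleGraph.Walk.support_cons, ht])))

/-- Union of two connected induced subgraphs meeting in a point is connected. -/
lemma connected_induce_union {α : Type} {G : SimpleGraph α} {S S' : Set α}
    (hS : (G.induce S).Connected) (hS' : (G.induce S').Connected)
    (hI : (S ∩ S').Nonempty) : (G.induce (S ∪ S')).Connected := by
  obtain ⟨c, hcS, hcS'⟩ := hI
  have key : ∀ (x : α) (hx : x ∈ S ∪ S'),
      (G.induce (S ∪ S')).Reachable ⟨x, hx⟩ ⟨c, Or.inl hcS⟩ := by
    intro x hx
    rcases hx with hxS | hxS'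
    · exact (hS.preconnected ⟨x, hxS⟩ ⟨c, hcS⟩).map
        (G.induceHomOfLE Set.subset_union_left).toHom
    · exact (hS'.preconnected ⟨x, hxS'⟩ ⟨c, hcS'⟩).map
        (G.induceHomOfLE Set.subset_union_right).toHom
  rw [SimpleGraph.connected_iff_exists_forall_reachable]
  exact ⟨⟨c, Or.inl hcS⟩, fun x => (key x.1 x.2).symm⟩

/-- Chain lemma: union of connected subtrees along a walk is connected. -/
lemma connected_induce_iUnion_walk {V T : Type} {G : SimpleGraph V} {τ : SimpleGraph T}
    (f : V → Set T) (hconn : ∀ u, (τ.induce (f u)).Connected)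
    (hadj : ∀ ⦃u u'⦄, G.Adj u u' → (f u ∩ f u').Nonempty) :
    ∀ {x y : V} (w : G.Walk x y), (τ.induce (⋃ u ∈ w.support, f u)).Connected := by
  intro x y w
  induction w with
  | nil =>
    rename_i u
    have huni : (⋃ t ∈ (SimpleGraph.Walk.nil : G.Walk u u).support, f t) = f u := by
      simp
    rw [huni]; exact hconn u
  | @cons u u' w h q ih =>
    have hset : (⋃ t ∈ (SimpleGraph.Walk.cons h q).support, f t)
        = f u ∪ (⋃ t ∈ q.support, f t) := by
      ext s
      simp [SimpleGraph.Walk.support_cons, or_and_right, Set.mem_iUnion, exists_or]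
    rw [hset]
    apply connected_induce_union (hconn u) ih
    obtain ⟨t, ht1, ht2⟩ := hadj h
    exact ⟨t, ht1, Set.mem_biUnion q.start_mem_support ht2⟩

end Stmt8Aux

namespace Stmt8Aux

/-- Pull back a walk avoiding `none` in a graph on `Option T` to `τ`. -/
lemma pull_walk {T : Type} {τ : SimpleGraph T} {H : SimpleGraph (Option T)}
    (hAdj : ∀ s t : T, H.Adj (some s) (some t) → τ.Adj s t) :
    ∀ {o o' : Option T} (w : H.Walk o o'), none ∉ w.support →
      ∀ {s t : T}, o = some s → o' = some t →
        ∃ w' : τ.Walk s t, w'.support.map Option.some = w.support ∧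
          w'.edges.map (Sym2.map Option.some) = w.edges := by
  intro o o' w
  induction w with
  | nil =>
    rename_i u
    intro _ s t hs ht
    have : s = t := by rw [hs] at ht; exact Option.some_injective _ ht
    subst this
    cases hs
    exact ⟨SimpleGraph.Walk.nil, by simp, by simp⟩
  | @cons u u' w h q ih =>
    intro hn s t hs ht
    have hu'ne : u' ≠ none := by
      rintro rfl
      exact hn (by simp [SimpleGraph.Walk.support_cons, q.start_mem_support])
    obtain ⟨s₂, rfl⟩ := Option.ne_none_iff_exists'.mp hu'ne
    subst hs
    have hqn : none ∉ q.support := fun hmem =>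
      hn (by simp [SimpleGraph.Walk.support_cons, hmem])
    obtain ⟨w', hsupp, hedges⟩ := ih hqn rfl ht
    refine ⟨SimpleGraph.Walk.cons (hAdj _ _ h) w', ?_, ?_⟩
    · simp [SimpleGraph.Walk.support_cons, hsupp]
    · simp [SimpleGraph.Walk.edges_cons, hedges, Sym2.map_pair_eq]

/-- Transfer a cycle along `some`. -/
lemma acyclic_of_pull {T : Type} {τ : SimpleGraph T} {H : SimpleGraph (Option T)}
    (hAdj : ∀ s t : T, H.Adj (some s) (some t) → τ.Adj s t)
    (hτ : τ.IsAcyclic) {s : T} (c : H.Walk (some s) (some s))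
    (hn : none ∉ c.support) (hc : c.IsCycle) : False := by
  obtain ⟨c', hsupp, hedges⟩ := pull_walk hAdj c hn rfl rfl
  have hctrail : c.edges.Nodup := hc.edges_nodup
  have htrail : c'.edges.Nodup := (hedges ▸ hctrail).of_map
  have hlen : c'.length = c.length := by
    rw [← SimpleGraph.Walk.length_edges, ← SimpleGraph.Walk.length_edges, ← hedges,
      List.length_map]
  have hne : c' ≠ SimpleGraph.Walk.nil := by
    intro hnil
    have := hc.three_le_length
    rw [← hlen, hnil] at this
    simp at this
  have htail : c'.support.tail.Nodup := by
    have := hc.support_nodup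
    rw [← hsupp, ← List.map_tail] at this
    exact this.of_map
  exact hτ c' ⟨⟨⟨htrail⟩, hne⟩, htail⟩

/-- Connectivity of the `some`-image of a connected induced set. -/
lemma connected_induce_image_some {T : Type} {τ : SimpleGraph T} {H : SimpleGraph (Option T)}
    (hAdj : ∀ s t : T, τ.Adj s t → H.Adj (some s) (some t)) {U : Set T}
    (hU : (τ.induce U).Connected) : (H.induce (Option.some '' U)).Connected := by
  let ψ : τ.induce U →g H.induce (Option.some '' U) :=
    ⟨fun t => ⟨some t.1, Set.mem_image_of_mem _ t.2⟩, fun {a b} hab => hAdj _ _ hab⟩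
  rw [SimpleGraph.connected_iff_exists_forall_reachable]
  obtain ⟨⟨t₀, ht₀⟩⟩ := hU.nonempty
  refine ⟨⟨some t₀, Set.mem_image_of_mem _ ht₀⟩, ?_⟩
  rintro ⟨o, ho⟩
  obtain ⟨t, ht, rfl⟩ := ho
  exact (hU.preconnected ⟨t₀, ht₀⟩ ⟨t, ht⟩).map ψ

/-- Connectivity after inserting the new leaf `none`. -/
lemma connected_induce_insert_none {T : Type} {τ : SimpleGraph T} {H : SimpleGraph (Option T)}
    (hAdj : ∀ s t : T, τ.Adj s t → H.Adj (some s) (some t)) {U : Set T} {z : T}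
    (hU : (τ.induce U).Connected) (hzU : z ∈ U) (hz : H.Adj (some z) none) :
    (H.induce (insert none (Option.some '' U))).Connected := by
  let ψ : τ.induce U →g H.induce (insert none (Option.some '' U)) :=
    ⟨fun t => ⟨some t.1, Set.mem_insert_of_mem _ (Set.mem_image_of_mem _ t.2)⟩,
      fun {a b} hab => hAdj _ _ hab⟩
  rw [SimpleGraph.connected_iff_exists_forall_reachable]
  refine ⟨⟨none, Set.mem_insert _ _⟩, ?_⟩
  rintro ⟨o, ho⟩
  have hstep : (H.induce (insert none (Option.some '' U))).Adj
      ⟨none, Set.mem_insert _ _⟩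
      ⟨some z, Set.mem_insert_of_mem _ (Set.mem_image_of_mem _ hzU)⟩ := by
    simpa using hz.symm
  rcases ho with ho | ho
  · subst ho
    rfl
  · obtain ⟨t, ht, rfl⟩ := ho
    exact hstep.reachable.trans ((hU.preconnected ⟨z, hzU⟩ ⟨t, ht⟩).map ψ)

end Stmt8Aux

namespace Stmt8Aux

lemma no_cycle_at_none {T : Type} {H : SimpleGraph (Option T)} {z : T}
    (hadj_none : ∀ o : Option T, H.Adj o none ↔ o = some z)
    (c : H.Walk none none) (hc : c.IsCycle) : False := by
  cases c with
  | nil => exact hc.ne_nil rfl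
  | cons h q =>
    rename_i u
    have hu : u = some z := (hadj_none u).mp h.symm
    subst hu
    have hq : q.support.Nodup := by
      have h1 := hc.support_nodup
      rwa [SimpleGraph.Walk.support_cons, List.tail_cons] at h1
    have hrevne : ¬ q.reverse.Nil := SimpleGraph.Walk.not_nil_of_ne (by simp)
    obtain ⟨u₂, h₂, r, hqr⟩ := SimpleGraph.Walk.not_nil_iff.mp hrevne
    have hu₂ : u₂ = some z := (hadj_none u₂).mp h₂.symm
    subst hu₂
    have hqs : q.support = r.support.reverse ++ [none] := by
      have h1 : q.reverse.support = none :: r.support := by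
        rw [hqr, SimpleGraph.Walk.support_cons]
      have h2 : q.support.reverse = none :: r.support := by
        rw [← SimpleGraph.Walk.support_reverse, h1]
      calc q.support = q.support.reverse.reverse := (List.reverse_reverse _).symm
        _ = (none :: r.support).reverse := by rw [h2]
        _ = r.support.reverse ++ [none] := by simp
    have hrnodup : r.support.Nodup := by
      rw [hqs] at hq
      exact List.nodup_reverse.mp (List.nodup_append.mp hq).1
    have hrnil : r = SimpleGraph.Walk.nil :=
      SimpleGraph.Walk.isPath_iff_eq_nil.mp (SimpleGraph.Walk.IsPath.mk' hrnodup)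
    have hql : q.length = 1 := by
      have h3 : q.reverse.length = 1 := by rw [hqr, hrnil]; simp
      calc q.length = q.reverse.length := (SimpleGraph.Walk.length_reverse q).symm
        _ = 1 := h3
    have h4 := hc.three_le_length
    rw [SimpleGraph.Walk.length_cons, hql] at h4
    omega

end Stmt8Aux

/-- given a separation `(A,B)` of `G`, a node `z` of a tree-decomposition
`(T, X)` with `X_z ⊆ B`, and disjoint paths `P₁,…,P_m` (`m = |A ∩ B|`) from `A` to `X_z`
each meeting `A ∩ B` in exactly one vertex `v i`, the decomposition obtained by adding a
new leaf `c` adjacent to `z` with bag `B` and replacing each bag `X_t` by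
`(X_t ∩ A) ∪ {v i : X_t ∩ B ∩ V(P_i) ≠ ∅}` is a tree-decomposition of `G`. -/
theorem stmt8 {V T : Type} [Fintype V] (G : SimpleGraph V) (A B : Set V)
    (hsepU : A ∪ B = Set.univ)
    (hsepE : ∀ a ∈ A \ B, ∀ b ∈ B \ A, ¬ G.Adj a b)
    (τ : SimpleGraph T) (X : T → Set V) (htd : IsTreeDecomp G τ X)
    (z : T) (hz : X z ⊆ B)
    (m : ℕ) (hm : m = (A ∩ B).ncard)
    (a b : Fin m → V) (p : ∀ i, G.Walk (a i) (b i))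
    (hpath : ∀ i, (p i).IsPath) (ha : ∀ i, a i ∈ A) (hb : ∀ i, b i ∈ X z)
    (hdisj : ∀ i j, i ≠ j → ∀ x ∈ (p i).support, x ∉ (p j).support)
    (v : Fin m → V)
    (hv : ∀ i, {x | x ∈ (p i).support} ∩ (A ∩ B) = {v i}) :
    IsTreeDecomp G
      (SimpleGraph.fromRel (fun o o' : Option T =>
        (∃ s t, o = some s ∧ o' = some t ∧ τ.Adj s t) ∨ (o = some z ∧ o' = none)))
      (fun o : Option T => Option.elim o B (fun t =>
        (X t ∩ A) ∪
          {x | ∃ i, x = v i ∧ (X t ∩ B ∩ {y | y ∈ (p i).support}).Nonempty})) := by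
  classical
  set H : SimpleGraph (Option T) := SimpleGraph.fromRel (fun o o' : Option T =>
      (∃ s t, o = some s ∧ o' = some t ∧ τ.Adj s t) ∨ (o = some z ∧ o' = none)) with hHdef
  set X' : Option T → Set V := (fun o : Option T => Option.elim o B (fun t =>
      (X t ∩ A) ∪
        {x | ∃ i, x = v i ∧ (X t ∩ B ∩ {y | y ∈ (p i).support}).Nonempty})) with hX'def
  have hX'none : X' none = B := rfl
  have hX'some : ∀ t : T, X' (some t) = (X t ∩ A) ∪
      {x | ∃ i, x = v i ∧ (X t ∩ B ∩ {y | y ∈ (p i).support}).Nonempty} := fun t => rfl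
  have hUniv : ∀ x : V, x ∈ A ∪ B := fun x => hsepU ▸ Set.mem_univ x
  have hvmemP : ∀ i, v i ∈ (p i).support := by
    intro i
    have h1 : v i ∈ {x | x ∈ (p i).support} ∩ (A ∩ B) := by rw [hv i]; rfl
    exact h1.1
  have hvAB : ∀ i, v i ∈ A ∩ B := by
    intro i
    have h1 : v i ∈ {x | x ∈ (p i).support} ∩ (A ∩ B) := by rw [hv i]; rfl
    exact h1.2
  have hvinj : Function.Injective v := by
    intro i j hij
    by_contra hne
    exact hdisj i j hne (v i) (hvmemP i) (hij ▸ hvmemP j)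
  have hvsurj : ∀ x ∈ A ∩ B, ∃ i, x = v i := by
    haveI : Fintype ↥(A ∩ B) := Fintype.ofFinite _
    have hcard : Fintype.card (Fin m) = Fintype.card ↥(A ∩ B) := by
      rw [Fintype.card_fin, hm, ← Nat.card_coe_set_eq, Nat.card_eq_fintype_card]
    have hinj : Function.Injective (fun i => (⟨v i, hvAB i⟩ : ↥(A ∩ B))) := by
      intro i j hij
      exact hvinj (congrArg Subtype.val hij)
    have hsurj := ((Fintype.bijective_iff_injective_and_card _).mpr ⟨hinj, hcard⟩).surjective
    intro x hx
    obtain ⟨i, hi⟩ := hsurj ⟨x, hx⟩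
    exact ⟨i, (congrArg Subtype.val hi).symm⟩
  have hadj_ss : ∀ s t : T, H.Adj (some s) (some t) ↔ τ.Adj s t := by
    intro s t
    rw [hHdef]
    constructor
    · intro h
      rw [SimpleGraph.fromRel_adj] at h
      obtain ⟨hne, h⟩ := h
      rcases h with (⟨s', t', hs, ht, hadj⟩ | ⟨h1, h2⟩) | (⟨s', t', hs, ht, hadj⟩ | ⟨h1, h2⟩)
      · rw [Option.some_inj] at hs ht; subst hs; subst ht; exact hadj
      · exact absurd h2 (by simp)
      · rw [Option.some_inj] at hs ht; subst hs; subst ht; exact hadj.symm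
      · exact absurd h2 (by simp)
    · intro hadj
      rw [SimpleGraph.fromRel_adj]
      exact ⟨by simpa using hadj.ne, Or.inl (Or.inl ⟨s, t, rfl, rfl, hadj⟩)⟩
  have hadj_none : ∀ o : Option T, H.Adj o none ↔ o = some z := by
    intro o
    rw [hHdef]
    constructor
    · intro h
      rw [SimpleGraph.fromRel_adj] at h
      obtain ⟨hne, h⟩ := h
      rcases h with (⟨s', t', hs, ht, hadj⟩ | ⟨h1, h2⟩) | (⟨s', t', hs, ht, hadj⟩ | ⟨h1, h2⟩)
      · exact absurd ht (by simp)
      · exact h1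
      · exact absurd hs (by simp)
      · exact absurd h1 (by simp)
    · rintro rfl
      rw [SimpleGraph.fromRel_adj]
      exact ⟨by simp, Or.inl (Or.inr ⟨rfl, rfl⟩)⟩
  let φ : τ →g H := ⟨Option.some, fun {s t} hadj => (hadj_ss s t).mpr hadj⟩
  refine ⟨?_, ?_, ?_, ?_⟩
  · -- H is a tree
    constructor
    · rw [SimpleGraph.connected_iff_exists_forall_reachable]
      refine ⟨none, ?_⟩
      intro o
      cases o with
      | none => rfl
      | some t =>
        have h1 : H.Reachable (some z) (some t) :=
          (htd.isTree.isConnected.preconnected z t).map φ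
        exact (((hadj_none (some z)).mpr rfl).reachable.symm).trans h1
    · intro o c hc
      by_cases hn : (none : Option T) ∈ c.support
      · exact Stmt8Aux.no_cycle_at_none hadj_none (c.rotate _ hn) (hc.rotate hn)
      · cases o with
        | none => exact hn c.start_mem_support
        | some s =>
          exact Stmt8Aux.acyclic_of_pull (fun s t hadj => (hadj_ss s t).mp hadj)
            (SimpleGraph.IsTree.IsAcyclic htd.isTree) c hn hc
  · -- coverV
    intro x
    by_cases hxB : x ∈ B
    · exact ⟨none, hxB⟩
    · have hxA : x ∈ A := (hUniv x).resolve_right hxB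
      obtain ⟨t, ht⟩ := htd.coverV x
      exact ⟨some t, Or.inl ⟨ht, hxA⟩⟩
  · -- coverE
    intro x y hxy
    obtain ⟨t, hxt, hyt⟩ := htd.coverE hxy
    by_cases hxB : x ∈ B <;> by_cases hyB : y ∈ B
    · exact ⟨none, hxB, hyB⟩
    · have hyA : y ∈ A := (hUniv y).resolve_right hyB
      have hxA : x ∈ A := by
        by_contra hxA
        exact hsepE y ⟨hyA, hyB⟩ x ⟨hxB, hxA⟩ hxy.symm
      exact ⟨some t, Or.inl ⟨hxt, hxA⟩, Or.inl ⟨hyt, hyA⟩⟩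
    · have hxA : x ∈ A := (hUniv x).resolve_right hxB
      have hyA : y ∈ A := by
        by_contra hyA
        exact hsepE x ⟨hxA, hxB⟩ y ⟨hyB, hyA⟩ hxy
      exact ⟨some t, Or.inl ⟨hxt, hxA⟩, Or.inl ⟨hyt, hyA⟩⟩
    · exact ⟨some t, Or.inl ⟨hxt, (hUniv x).resolve_right hxB⟩,
        Or.inl ⟨hyt, (hUniv y).resolve_right hyB⟩⟩
  · -- subtreeConn
    intro x
    by_cases hxA : x ∈ A
    · by_cases hxB : x ∈ B
      · -- x ∈ A ∩ B
        obtain ⟨i, rfl⟩ := hvsurj x ⟨hxA, hxB⟩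
        have hqsubP : ∀ y ∈ ((p i).dropUntil (v i) (hvmemP i)).support, y ∈ (p i).support :=
          fun y hy => SimpleGraph.Walk.support_dropUntil_subset _ _ hy
        have hqB : ∀ y ∈ ((p i).dropUntil (v i) (hvmemP i)).support, y ∈ B := by
          intro y hy
          have hrev : ((p i).dropUntil (v i) (hvmemP i)).reverse.IsPath :=
            ((hpath i).dropUntil (hvmemP i)).reverse
          refine Stmt8Aux.walk_subset_side hsepU hsepE
            ((p i).dropUntil (v i) (hvmemP i)).reverse hrev (hz (hb i)) ?_ y ?_
          · intro w hw hwAB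
            have h1 : w ∈ {x | x ∈ (p i).support} ∩ (A ∩ B) :=
              ⟨hqsubP w (by simpa [SimpleGraph.Walk.support_reverse] using hw), hwAB⟩
            rw [hv i] at h1
            exact h1
          · simpa [SimpleGraph.Walk.support_reverse] using hy
        have hBP : ∀ y, (y ∈ B ∧ y ∈ (p i).support) ↔
            y ∈ ((p i).dropUntil (v i) (hvmemP i)).support := by
          intro y
          constructor
          · rintro ⟨hyB, hyP⟩
            have hyP' := hyP
            rw [← SimpleGraph.Walk.take_spec (p i) (hvmemP i),
              SimpleGraph.Walk.mem_support_append_iff] at hyP'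
            rcases hyP' with hyT | hyQ
            · have hyA : y ∈ A := by
                refine Stmt8Aux.walk_subset_side (A := B) (B := A)
                  (by rw [Set.union_comm]; exact hsepU)
                  (fun a' ha' b' hb' hab => hsepE b' hb' a' ha' hab.symm)
                  ((p i).takeUntil (v i) (hvmemP i)) ((hpath i).takeUntil (hvmemP i))
                  (ha i) ?_ y hyT
                intro w hw hwBA
                have h1 : w ∈ {x | x ∈ (p i).support} ∩ (A ∩ B) :=
                  ⟨SimpleGraph.Walk.support_takeUntil_subset _ _ hw, ⟨hwBA.2, hwBA.1⟩⟩
                rw [hv i] at h1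
                exact h1
              have hy2 : y ∈ {x | x ∈ (p i).support} ∩ (A ∩ B) := ⟨hyP, hyA, hyB⟩
              rw [hv i, Set.mem_singleton_iff] at hy2
              rw [hy2]
              exact SimpleGraph.Walk.start_mem_support _
            · exact hyQ
          · intro hy
            exact ⟨hqB y hy, hqsubP y hy⟩
        set U : Set T := {t | (X t ∩ B ∩ {y | y ∈ (p i).support}).Nonempty} with hUdef
        have hUeq : U = ⋃ u ∈ ((p i).dropUntil (v i) (hvmemP i)).support, {t | u ∈ X t} := by
          ext t
          simp only [hUdef, Set.mem_setOf_eq, Set.mem_iUnion, exists_prop]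
          constructor
          · rintro ⟨y, ⟨⟨hy1, hy2⟩, hy3⟩⟩
            exact ⟨y, (hBP y).mp ⟨hy2, hy3⟩, hy1⟩
          · rintro ⟨y, hy, hyt⟩
            exact ⟨y, ⟨⟨hyt, hqB y hy⟩, hqsubP y hy⟩⟩
        have hUconn : (τ.induce U).Connected := by
          rw [hUeq]
          exact Stmt8Aux.connected_induce_iUnion_walk _ htd.subtreeConn
            (fun u u' hadj => (htd.coverE hadj).imp (fun t ht => ⟨ht.1, ht.2⟩))
            ((p i).dropUntil (v i) (hvmemP i))
        have hzU : z ∈ U := ⟨b i, ⟨⟨hb i, hz (hb i)⟩, (p i).end_mem_support⟩⟩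
        have hSeq : {o : Option T | v i ∈ X' o} = insert none (Option.some '' U) := by
          ext o
          cases o with
          | none =>
            simp [hX'none, hxB]
          | some t =>
            simp only [Set.mem_setOf_eq, hX'some, Set.mem_union, Set.mem_insert_iff,
              Set.mem_image, hUdef, Set.mem_setOf_eq]
            constructor
            · rintro (⟨hXt, _⟩ | ⟨j, hj, hne⟩)
              · exact Or.inr ⟨t, ⟨v i, ⟨⟨hXt, hxB⟩, hvmemP i⟩⟩, rfl⟩
              · cases hvinj hj
                exact Or.inr ⟨t, hne, rfl⟩
            · rintro (hcontra | ⟨t', ht', hteq⟩)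
              · exact absurd hcontra (by simp)
              · cases Option.some_injective _ hteq
                exact Or.inr ⟨i, rfl, ht'⟩
        rw [hSeq]
        exact Stmt8Aux.connected_induce_insert_none
          (fun s t hadj => (hadj_ss s t).mpr hadj) hUconn hzU ((hadj_none (some z)).mpr rfl)
      · -- x ∈ A \ B
        have hSeq : {o : Option T | x ∈ X' o} = Option.some '' {t | x ∈ X t} := by
          ext o
          cases o with
          | none =>
            simp only [Set.mem_setOf_eq, hX'none, Set.mem_image]
            exact ⟨fun h => absurd h hxB, fun ⟨t, _, ht⟩ => absurd ht (by simp)⟩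
          | some t =>
            simp only [Set.mem_setOf_eq, hX'some, Set.mem_union, Set.mem_image,
              Set.mem_setOf_eq]
            constructor
            · rintro (⟨h1, _⟩ | ⟨j, hj, _⟩)
              · exact ⟨t, h1, rfl⟩
              · exact absurd (hj ▸ (hvAB j).2) hxB
            · rintro ⟨t', ht', hteq⟩
              cases Option.some_injective _ hteq
              exact Or.inl ⟨ht', hxA⟩
        rw [hSeq]
        exact Stmt8Aux.connected_induce_image_some
          (fun s t hadj => (hadj_ss s t).mpr hadj) (htd.subtreeConn x)
    · have hxB : x ∈ B := (hUniv x).resolve_left hxA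
      have hSeq : {o : Option T | x ∈ X' o} = {none} := by
        ext o
        cases o with
        | none => simp [hX'none, hxB]
        | some t =>
          simp only [Set.mem_setOf_eq, hX'some, Set.mem_union, Set.mem_singleton_iff]
          constructor
          · rintro (⟨_, h2⟩ | ⟨j, hj, _⟩)
            · exact absurd h2 hxA
            · exact absurd (hj ▸ (hvAB j).1) hxA
          · intro h
            exact absurd h (by simp)
      rw [hSeq]
      rw [SimpleGraph.connected_iff_exists_forall_reachable]
      refine ⟨⟨none, rfl⟩, ?_⟩
      rintro ⟨o, ho⟩
      have hon : o = none := ho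
      subst hon
      rfl
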